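/- (Fundamental Lemma) In H_n(q,∞) (and likewise in H_n(q,d)), for i, k ∈ ℕ and ε ∈ {+1, −1}: (i) t^{εi} g_1^ε t^{εk} g_1^ε = g_1^ε t^{εk} g_1^ε t^{εi} + (q^ε − 1) · Σ_{j=1}^{i} t^{εj} g_1^ε t^{ε(k+i−j)} + (1 − q^ε) · Σ_{j=0}^{i−1} t^{ε(k+j)} g_1^ε t^{ε(i−j)}; and (ii) t^{−εi} g_1^ε t^{εk} g_1^ε = g_1^ε t^{εk} g_1^ε t^{−εi} + (q^ε − 1) · Σ_{j=1}^{i} t^{ε(k−j)} g_1^ε t^{−ε(i−j)} + (1 − q^ε) · Σ_{j=1}^{i} t^{−ε(i−j)} g_1^ε t^{ε(k−j)}. -/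

import Mathlib

/-!
Knot theory related to generalized and cyclotomic Hecke algebras of type B
(S. Lambropoulou). Generic setting: an algebra containing invertible elements
`t, g_1, …, g_m` and a central invertible parameter `q` satisfying the defining
relations of the generalized type-`B` Hecke algebra `H_{m+1}(q,∞)`; both
`H_{m+1}(q,∞)` and the cyclotomic algebras `H_{m+1}(q,d)` are instances.
-/

namespace KnotTypeB

variable {A : Type*} [Ring A]

/-- The ascending word `g_i^e g_{i+1}^e ⋯ g_j^e` (the empty product `1` if `j + 1 ≤ i`). -/
def ascW (g : ℕ → Aˣ) (e : ℤ) (i j : ℕ) : A :=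
  ((List.range' i (j + 1 - i)).map fun l => ((g l ^ e : Aˣ) : A)).prod

/-- The descending word `g_j^e g_{j-1}^e ⋯ g_i^e` (the empty product `1` if `j + 1 ≤ i`). -/
def descW (g : ℕ → Aˣ) (e : ℤ) (j i : ℕ) : A :=
  ((List.range' i (j + 1 - i)).reverse.map fun l => ((g l ^ e : Aˣ) : A)).prod

/-- The palindromic word `g_i^e g_{i+1}^e ⋯ g_{m-1}^e g_m^e g_{m-1}^e ⋯ g_i^e`
(interpreted as `1` when `m < i`). -/
def palW (g : ℕ → Aˣ) (e : ℤ) (i m : ℕ) : A :=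
  ascW g e i m * descW g e (m - 1) i

/-- `t_i = g_i g_{i-1} ⋯ g_1 t g_1 ⋯ g_{i-1} g_i` (as a unit), `t_0 = t`. -/
def tW (g : ℕ → Aˣ) (t : Aˣ) : ℕ → Aˣ
  | 0 => t
  | i + 1 => g (i + 1) * tW g t i * g (i + 1)

/-- `t'_i = g_i g_{i-1} ⋯ g_1 t g_1⁻¹ ⋯ g_{i-1}⁻¹ g_i⁻¹` (as a unit), `t'_0 = t`. -/
def tpW (g : ℕ → Aˣ) (t : Aˣ) : ℕ → Aˣ
  | 0 => t
  | i + 1 => g (i + 1) * tpW g t i * (g (i + 1))⁻¹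

/-- `T_i^k = g_i g_{i-1} ⋯ g_1 t^k g_1 ⋯ g_{i-1} g_i` (as a unit), `T_0^k = t^k`. -/
def TTW (g : ℕ → Aˣ) (t : Aˣ) (k : ℤ) : ℕ → Aˣ
  | 0 => t ^ k
  | i + 1 => g (i + 1) * TTW g t k i * g (i + 1)

/-- The defining relations of the generalized Iwahori–Hecke algebra of type `B` with
invertible generators `t, g_1, …, g_m` and a central invertible parameter `q`:
the type-`B` braid relations together with the quadratic relations
`g_i² = (q-1)g_i + q`.  Any ring admitting such elements is (the image of) a
`ℤ[q^{±1}]`-algebra quotient of `H_{m+1}(q,∞)`; in particular the cyclotomic algebras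
`H_{m+1}(q,d)` also satisfy these hypotheses. -/
def HeckeRels (q t : Aˣ) (g : ℕ → Aˣ) (m : ℕ) : Prop :=
  (∀ a : A, (q : A) * a = a * (q : A)) ∧
  (∀ i, 1 ≤ i → i + 1 ≤ m → (g i : A) * g (i + 1) * g i = (g (i + 1) : A) * g i * g (i + 1)) ∧
  (∀ i j, 1 ≤ i → i + 1 < j → j ≤ m → (g i : A) * g j = (g j : A) * g i) ∧
  (1 ≤ m → (t : A) * g 1 * t * g 1 = (g 1 : A) * t * g 1 * t) ∧
  (∀ i, 2 ≤ i → i ≤ m → (t : A) * g i = (g i : A) * t) ∧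
  (∀ i, 1 ≤ i → i ≤ m → (g i : A) ^ 2 = ((q : A) - 1) * g i + (q : A))



section Statement12Aux

private def P (τ : Aˣ) (m : ℤ) : A := ((τ ^ m : Aˣ) : A)
private def w (τ γ : Aˣ) (a b : ℤ) : A := P τ a * (γ : A) * P τ b

private lemma P_add (τ : Aˣ) (a b : ℤ) : P τ a * P τ b = P τ (a + b) := by
  unfold P; rw [← Units.val_mul, ← zpow_add]

private lemma P_zero (τ : Aˣ) : P τ 0 = 1 := by simp [P]
private lemma P_one (τ : Aˣ) : P τ 1 = (τ : A) := by simp [P]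

private lemma w_congr (τ γ : Aˣ) {a a' b b' : ℤ} (ha : a = a') (hb : b = b') :
    w τ γ a b = w τ γ a' b' := by rw [ha, hb]

private lemma P_mul_w (τ γ : Aˣ) (c a b : ℤ) : P τ c * w τ γ a b = w τ γ (c + a) b := by
  unfold w; rw [← mul_assoc, ← mul_assoc, P_add]

private lemma w_mul_P (τ γ : Aˣ) (a b c : ℤ) : w τ γ a b * P τ c = w τ γ a (b + c) := by
  unfold w; rw [mul_assoc, P_add]

section KeyL
variable (τ γ Q : Aˣ)
  (hQ : ∀ a : A, (Q : A) * a = a * (Q : A))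
  (hbr : (τ : A) * γ * τ * γ = (γ : A) * τ * γ * τ)
  (hq : (γ : A) * γ = ((Q : A) - 1) * γ + (Q : A))

include hQ hbr hq

private lemma keyL (m : ℤ) :
    w τ γ 1 m * (γ : A) =
      (γ : A) * w τ γ m 1 + ((Q : A) - 1) * w τ γ 1 m + (1 - (Q : A)) * w τ γ m 1 := by
  have ubr : τ * γ * τ * γ = γ * τ * γ * τ := Units.ext (by simpa using hbr)
  have cu : ∀ m : ℤ, (γ * τ * γ) * τ ^ m = τ ^ m * (γ * τ * γ) := by
    intro m
    have h1 : Commute (γ * τ * γ) τ := by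
      show (γ * τ * γ) * τ = τ * (γ * τ * γ)
      simpa [mul_assoc] using ubr.symm
    exact (Commute.zpow_right h1 m).eq
  have sc : ∀ x y : A, x * (((Q : A) - 1) * y) = ((Q : A) - 1) * (x * y) := by
    intro x y
    have c1 : ∀ z : A, ((Q : A) - 1) * z = z * ((Q : A) - 1) := by
      intro z; rw [sub_mul, mul_sub, hQ, one_mul, mul_one]
    rw [← mul_assoc, ← c1, mul_assoc]
  have sc' : ∀ x y : A, x * ((1 - (Q : A)) * y) = (1 - (Q : A)) * (x * y) := by
    intro x y
    have c1 : ∀ z : A, (1 - (Q : A)) * z = z * (1 - (Q : A)) := by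
      intro z; rw [sub_mul, mul_sub, hQ, one_mul, mul_one]
    rw [← mul_assoc, ← c1, mul_assoc]
  have f1 : (γ : A) * (w τ γ 1 m * γ) = w τ γ m 1 * ((γ : A) * γ) := by
    simp only [w, P, ← Units.val_mul]
    refine congrArg Units.val ?_
    calc γ * (τ ^ (1:ℤ) * γ * τ ^ m * γ) = (γ * τ * γ) * τ ^ m * γ := by group
      _ = τ ^ m * (γ * τ * γ) * γ := by rw [cu m]
      _ = τ ^ m * γ * τ ^ (1:ℤ) * (γ * γ) := by group
  have f2 : (γ : A) * w τ γ 1 m = w τ γ m 1 * γ := by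
    simp only [w, P, ← Units.val_mul]
    refine congrArg Units.val ?_
    calc γ * (τ ^ (1:ℤ) * γ * τ ^ m) = (γ * τ * γ) * τ ^ m := by group
      _ = τ ^ m * (γ * τ * γ) := cu m
      _ = τ ^ m * γ * τ ^ (1:ℤ) * γ := by group
  have hcan : ∀ x y : A, (γ : A) * x = (γ : A) * y → x = y := by
    intro x y h
    have h2 := congrArg (fun z => ((γ⁻¹ : Aˣ) : A) * z) h
    simpa [← mul_assoc, Units.inv_mul] using h2
  apply hcan
  have hL : (γ : A) * (w τ γ 1 m * γ) = ((Q : A) - 1) * (w τ γ m 1 * γ) + (Q : A) * w τ γ m 1 := by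
    rw [f1, hq, mul_add, sc, ← hQ (w τ γ m 1)]
  have hR : (γ : A) * ((γ : A) * w τ γ m 1 + ((Q : A) - 1) * w τ γ 1 m +
      (1 - (Q : A)) * w τ γ m 1) = ((Q : A) - 1) * (w τ γ m 1 * γ) + (Q : A) * w τ γ m 1 := by
    rw [mul_add, mul_add, ← mul_assoc, hq, sc, f2, sc']
    noncomm_ring
  rw [hL, hR]

private lemma keyLneg (m : ℤ) :
    w τ γ (-1) m * (γ : A) =
      (γ : A) * w τ γ m (-1) + ((Q : A) - 1) * (P τ (m - 1) * γ) +
        (1 - (Q : A)) * ((γ : A) * P τ (m - 1)) := by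
  have h1 := keyL τ γ Q hQ hbr hq m
  have h2 : (γ : A) * w τ γ m 1 =
      w τ γ 1 m * γ - ((Q : A) - 1) * w τ γ 1 m - (1 - (Q : A)) * w τ γ m 1 := by
    rw [h1]; abel
  have e0 : w τ γ (-1) m * (γ : A) = P τ (-1) * ((γ : A) * w τ γ m 1) * P τ (-1) := by
    simp only [w, P, ← Units.val_mul]
    refine congrArg Units.val ?_
    group
  have e1 : P τ (-1) * (w τ γ 1 m * (γ : A)) * P τ (-1) = (γ : A) * w τ γ m (-1) := by
    simp only [w, P, ← Units.val_mul]
    refine congrArg Units.val ?_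
    group
  have e2 : P τ (-1) * w τ γ 1 m * P τ (-1) = (γ : A) * P τ (m - 1) := by
    simp only [w, P, ← Units.val_mul]
    refine congrArg Units.val ?_
    group
  have e3 : P τ (-1) * w τ γ m 1 * P τ (-1) = P τ (m - 1) * γ := by
    simp only [w, P, ← Units.val_mul]
    refine congrArg Units.val ?_
    group
  have sc : ∀ x y : A, x * (((Q : A) - 1) * y) = ((Q : A) - 1) * (x * y) := by
    intro x y
    have c1 : ∀ z : A, ((Q : A) - 1) * z = z * ((Q : A) - 1) := by
      intro z; rw [sub_mul, mul_sub, hQ, one_mul, mul_one]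
    rw [← mul_assoc, ← c1, mul_assoc]
  have sc' : ∀ x y : A, x * ((1 - (Q : A)) * y) = (1 - (Q : A)) * (x * y) := by
    intro x y
    have c1 : ∀ z : A, (1 - (Q : A)) * z = z * (1 - (Q : A)) := by
      intro z; rw [sub_mul, mul_sub, hQ, one_mul, mul_one]
    rw [← mul_assoc, ← c1, mul_assoc]
  rw [e0, h2, mul_sub, mul_sub, sub_mul, sub_mul, e1, sc, sc',
    mul_assoc ((Q : A) - 1) _ (P τ (-1)), e2,
    mul_assoc (1 - (Q : A)) _ (P τ (-1)), e3]
  noncomm_ring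


private lemma core1 (m : ℤ) (i : ℕ) :
    w τ γ (i : ℤ) m * (γ : A) =
      (γ : A) * w τ γ m (i : ℤ) +
        ((Q : A) - 1) * ∑ j ∈ Finset.range i,
          w τ γ ((j : ℤ) + 1) (m + (i : ℤ) - ((j : ℤ) + 1)) +
        (1 - (Q : A)) * ∑ j ∈ Finset.range i,
          w τ γ (m + (j : ℤ)) ((i : ℤ) - (j : ℤ)) := by
  have sc : ∀ x y : A, x * (((Q : A) - 1) * y) = ((Q : A) - 1) * (x * y) := by
    intro x y
    have c1 : ∀ z : A, ((Q : A) - 1) * z = z * ((Q : A) - 1) := by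
      intro z; rw [sub_mul, mul_sub, hQ, one_mul, mul_one]
    rw [← mul_assoc, ← c1, mul_assoc]
  have sc' : ∀ x y : A, x * ((1 - (Q : A)) * y) = (1 - (Q : A)) * (x * y) := by
    intro x y
    have c1 : ∀ z : A, (1 - (Q : A)) * z = z * (1 - (Q : A)) := by
      intro z; rw [sub_mul, mul_sub, hQ, one_mul, mul_one]
    rw [← mul_assoc, ← c1, mul_assoc]
  induction i with
  | zero => simp [w, P_zero, mul_assoc]
  | succ i hi =>
    push_cast
    have hA : w τ γ ((i : ℤ) + 1) m = P τ 1 * w τ γ (i : ℤ) m := by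
      rw [P_mul_w]; exact w_congr τ γ (by ring) rfl
    have hD : P τ 1 * ((γ : A) * w τ γ m (i : ℤ)) = w τ γ 1 m * (γ : A) * P τ (i : ℤ) := by
      simp only [w, P, ← Units.val_mul]
      refine congrArg Units.val ?_
      group
    have E1 : P τ 1 * ∑ j ∈ Finset.range i, w τ γ ((j : ℤ) + 1) (m + (i : ℤ) - ((j : ℤ) + 1)) =
        ∑ j ∈ Finset.range i, w τ γ ((j : ℤ) + 1 + 1) (m + (i : ℤ) - ((j : ℤ) + 1)) := by
      rw [Finset.mul_sum]
      exact Finset.sum_congr rfl fun j _ => by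
        rw [P_mul_w]; exact w_congr τ γ (by ring) rfl
    have E2 : P τ 1 * ∑ j ∈ Finset.range i, w τ γ (m + (j : ℤ)) ((i : ℤ) - (j : ℤ)) =
        ∑ j ∈ Finset.range i, w τ γ (m + (j : ℤ) + 1) ((i : ℤ) - (j : ℤ)) := by
      rw [Finset.mul_sum]
      exact Finset.sum_congr rfl fun j _ => by
        rw [P_mul_w]; exact w_congr τ γ (by ring) rfl
    have F1 : ∑ j ∈ Finset.range (i + 1),
          w τ γ ((j : ℤ) + 1) (m + ((i : ℤ) + 1) - ((j : ℤ) + 1)) =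
        (∑ j ∈ Finset.range i, w τ γ ((j : ℤ) + 1 + 1) (m + (i : ℤ) - ((j : ℤ) + 1))) +
          w τ γ 1 (m + (i : ℤ)) := by
      rw [Finset.sum_range_succ']
      congr 1
      · exact Finset.sum_congr rfl fun j _ => w_congr τ γ (by omega) (by omega)
      · exact w_congr τ γ (by omega) (by omega)
    have F2 : ∑ j ∈ Finset.range (i + 1),
          w τ γ (m + (j : ℤ)) (((i : ℤ) + 1) - (j : ℤ)) =
        (∑ j ∈ Finset.range i, w τ γ (m + (j : ℤ) + 1) ((i : ℤ) - (j : ℤ))) +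
          w τ γ m ((i : ℤ) + 1) := by
      rw [Finset.sum_range_succ']
      congr 1
      · exact Finset.sum_congr rfl fun j _ => w_congr τ γ (by omega) (by omega)
      · exact w_congr τ γ (by omega) (by omega)
    rw [F1, F2]
    calc w τ γ ((i : ℤ) + 1) m * (γ : A)
        = P τ 1 * (w τ γ (i : ℤ) m * (γ : A)) := by rw [hA, mul_assoc]
      _ = P τ 1 * ((γ : A) * w τ γ m (i : ℤ)) +
          ((Q : A) - 1) * (P τ 1 * ∑ j ∈ Finset.range i,
            w τ γ ((j : ℤ) + 1) (m + (i : ℤ) - ((j : ℤ) + 1))) +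
          (1 - (Q : A)) * (P τ 1 * ∑ j ∈ Finset.range i,
            w τ γ (m + (j : ℤ)) ((i : ℤ) - (j : ℤ))) := by
          rw [hi, mul_add, mul_add, sc, sc']
      _ = ((γ : A) * w τ γ m 1 + ((Q : A) - 1) * w τ γ 1 m + (1 - (Q : A)) * w τ γ m 1) *
            P τ (i : ℤ) +
          ((Q : A) - 1) * ∑ j ∈ Finset.range i,
            w τ γ ((j : ℤ) + 1 + 1) (m + (i : ℤ) - ((j : ℤ) + 1)) +
          (1 - (Q : A)) * ∑ j ∈ Finset.range i,
            w τ γ (m + (j : ℤ) + 1) ((i : ℤ) - (j : ℤ)) := by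
          rw [hD, keyL τ γ Q hQ hbr hq m, E1, E2]
      _ = (γ : A) * w τ γ m ((i : ℤ) + 1) + ((Q : A) - 1) * w τ γ 1 (m + (i : ℤ)) +
          (1 - (Q : A)) * w τ γ m ((i : ℤ) + 1) +
          ((Q : A) - 1) * ∑ j ∈ Finset.range i,
            w τ γ ((j : ℤ) + 1 + 1) (m + (i : ℤ) - ((j : ℤ) + 1)) +
          (1 - (Q : A)) * ∑ j ∈ Finset.range i,
            w τ γ (m + (j : ℤ) + 1) ((i : ℤ) - (j : ℤ)) := by
          rw [add_mul, add_mul, mul_assoc ((γ : A)) (w τ γ m 1) (P τ (i : ℤ)), w_mul_P,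
            mul_assoc ((Q : A) - 1) (w τ γ 1 m) (P τ (i : ℤ)), w_mul_P,
            mul_assoc (1 - (Q : A)) (w τ γ m 1) (P τ (i : ℤ)), w_mul_P,
            show w τ γ m (1 + (i : ℤ)) = w τ γ m ((i : ℤ) + 1) from w_congr τ γ rfl (by ring)]
      _ = (γ : A) * w τ γ m ((i : ℤ) + 1) +
          ((Q : A) - 1) * ((∑ j ∈ Finset.range i,
            w τ γ ((j : ℤ) + 1 + 1) (m + (i : ℤ) - ((j : ℤ) + 1))) + w τ γ 1 (m + (i : ℤ))) +
          (1 - (Q : A)) * ((∑ j ∈ Finset.range i,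
            w τ γ (m + (j : ℤ) + 1) ((i : ℤ) - (j : ℤ))) + w τ γ m ((i : ℤ) + 1)) := by
          rw [mul_add ((Q : A) - 1), mul_add (1 - (Q : A))]
          abel


omit hQ hbr hq in
private lemma w_zero_left (τ γ : Aˣ) (b : ℤ) : w τ γ 0 b = (γ : A) * P τ b := by
  simp [w, P_zero]

private lemma core2 (m : ℤ) (i : ℕ) :
    w τ γ (-(i : ℤ)) m * (γ : A) =
      (γ : A) * w τ γ m (-(i : ℤ)) +
        ((Q : A) - 1) * ∑ j ∈ Finset.range i,
          w τ γ (m - ((j : ℤ) + 1)) (-((i : ℤ) - ((j : ℤ) + 1))) +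
        (1 - (Q : A)) * ∑ j ∈ Finset.range i,
          w τ γ (-((i : ℤ) - ((j : ℤ) + 1))) (m - ((j : ℤ) + 1)) := by
  have sc : ∀ x y : A, x * (((Q : A) - 1) * y) = ((Q : A) - 1) * (x * y) := by
    intro x y
    have c1 : ∀ z : A, ((Q : A) - 1) * z = z * ((Q : A) - 1) := by
      intro z; rw [sub_mul, mul_sub, hQ, one_mul, mul_one]
    rw [← mul_assoc, ← c1, mul_assoc]
  have sc' : ∀ x y : A, x * ((1 - (Q : A)) * y) = (1 - (Q : A)) * (x * y) := by
    intro x y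
    have c1 : ∀ z : A, (1 - (Q : A)) * z = z * (1 - (Q : A)) := by
      intro z; rw [sub_mul, mul_sub, hQ, one_mul, mul_one]
    rw [← mul_assoc, ← c1, mul_assoc]
  induction i with
  | zero => simp [w, P_zero, mul_assoc]
  | succ i hi =>
    push_cast
    have hA : w τ γ (-((i : ℤ) + 1)) m = P τ (-1) * w τ γ (-(i : ℤ)) m := by
      rw [P_mul_w]; exact w_congr τ γ (by ring) rfl
    have hD : P τ (-1) * ((γ : A) * w τ γ m (-(i : ℤ))) =
        w τ γ (-1) m * (γ : A) * P τ (-(i : ℤ)) := by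
      simp only [w, P, ← Units.val_mul]
      refine congrArg Units.val ?_
      group
    have E1 : P τ (-1) * ∑ j ∈ Finset.range i,
          w τ γ (m - ((j : ℤ) + 1)) (-((i : ℤ) - ((j : ℤ) + 1))) =
        ∑ j ∈ Finset.range i,
          w τ γ (m - ((j : ℤ) + 1 + 1)) (-((i : ℤ) - ((j : ℤ) + 1))) := by
      rw [Finset.mul_sum]
      exact Finset.sum_congr rfl fun j _ => by
        rw [P_mul_w]; exact w_congr τ γ (by ring) rfl
    have E2 : P τ (-1) * ∑ j ∈ Finset.range i,
          w τ γ (-((i : ℤ) - ((j : ℤ) + 1))) (m - ((j : ℤ) + 1)) =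
        ∑ j ∈ Finset.range i,
          w τ γ (-((i : ℤ) - (j : ℤ))) (m - ((j : ℤ) + 1)) := by
      rw [Finset.mul_sum]
      exact Finset.sum_congr rfl fun j _ => by
        rw [P_mul_w]; exact w_congr τ γ (by ring) rfl
    have F1 : ∑ j ∈ Finset.range (i + 1),
          w τ γ (m - ((j : ℤ) + 1)) (-(((i : ℤ) + 1) - ((j : ℤ) + 1))) =
        (∑ j ∈ Finset.range i,
          w τ γ (m - ((j : ℤ) + 1 + 1)) (-((i : ℤ) - ((j : ℤ) + 1)))) +
          w τ γ (m - 1) (-(i : ℤ)) := by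
      rw [Finset.sum_range_succ']
      congr 1
      · exact Finset.sum_congr rfl fun j _ => w_congr τ γ (by omega) (by omega)
      · exact w_congr τ γ (by omega) (by omega)
    have F2 : ∑ j ∈ Finset.range (i + 1),
          w τ γ (-(((i : ℤ) + 1) - ((j : ℤ) + 1))) (m - ((j : ℤ) + 1)) =
        (∑ j ∈ Finset.range i,
          w τ γ (-((i : ℤ) - (j : ℤ))) (m - ((j : ℤ) + 1))) +
          (γ : A) * P τ (m - 1 - (i : ℤ)) := by
      rw [Finset.sum_range_succ, show (-(((i : ℤ) + 1) - ((i : ℤ) + 1))) = 0 by ring,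
        show m - ((i : ℤ) + 1) = m - 1 - (i : ℤ) by ring, w_zero_left]
      congr 1
      exact Finset.sum_congr rfl fun j _ => w_congr τ γ (by omega) (by omega)
    rw [F1, F2]
    have G3 : (1 - (Q : A)) * ((γ : A) * P τ (m - 1)) * P τ (-(i : ℤ)) =
        (1 - (Q : A)) * ((γ : A) * P τ (m - 1 - (i : ℤ))) := by
      rw [mul_assoc, mul_assoc, P_add]
      exact congrArg _ (congrArg _ (by rw [show m - 1 + -(i : ℤ) = m - 1 - (i : ℤ) by ring]))
    have G2 : ((Q : A) - 1) * (P τ (m - 1) * (γ : A)) * P τ (-(i : ℤ)) =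
        ((Q : A) - 1) * w τ γ (m - 1) (-(i : ℤ)) := by
      rw [mul_assoc]; rfl
    calc w τ γ (-((i : ℤ) + 1)) m * (γ : A)
        = P τ (-1) * (w τ γ (-(i : ℤ)) m * (γ : A)) := by rw [hA, mul_assoc]
      _ = P τ (-1) * ((γ : A) * w τ γ m (-(i : ℤ))) +
          ((Q : A) - 1) * (P τ (-1) * ∑ j ∈ Finset.range i,
            w τ γ (m - ((j : ℤ) + 1)) (-((i : ℤ) - ((j : ℤ) + 1)))) +
          (1 - (Q : A)) * (P τ (-1) * ∑ j ∈ Finset.range i,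
            w τ γ (-((i : ℤ) - ((j : ℤ) + 1))) (m - ((j : ℤ) + 1))) := by
          rw [hi, mul_add, mul_add, sc, sc']
      _ = ((γ : A) * w τ γ m (-1) + ((Q : A) - 1) * (P τ (m - 1) * (γ : A)) +
            (1 - (Q : A)) * ((γ : A) * P τ (m - 1))) * P τ (-(i : ℤ)) +
          ((Q : A) - 1) * ∑ j ∈ Finset.range i,
            w τ γ (m - ((j : ℤ) + 1 + 1)) (-((i : ℤ) - ((j : ℤ) + 1))) +
          (1 - (Q : A)) * ∑ j ∈ Finset.range i,
            w τ γ (-((i : ℤ) - (j : ℤ))) (m - ((j : ℤ) + 1)) := by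
          rw [hD, keyLneg τ γ Q hQ hbr hq m, E1, E2]
      _ = (γ : A) * w τ γ m (-((i : ℤ) + 1)) + ((Q : A) - 1) * w τ γ (m - 1) (-(i : ℤ)) +
          (1 - (Q : A)) * ((γ : A) * P τ (m - 1 - (i : ℤ))) +
          ((Q : A) - 1) * ∑ j ∈ Finset.range i,
            w τ γ (m - ((j : ℤ) + 1 + 1)) (-((i : ℤ) - ((j : ℤ) + 1))) +
          (1 - (Q : A)) * ∑ j ∈ Finset.range i,
            w τ γ (-((i : ℤ) - (j : ℤ))) (m - ((j : ℤ) + 1)) := by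
          rw [add_mul, add_mul, mul_assoc ((γ : A)) (w τ γ m (-1)) (P τ (-(i : ℤ))), w_mul_P,
            G2, G3,
            show w τ γ m (-1 + -(i : ℤ)) = w τ γ m (-((i : ℤ) + 1)) from w_congr τ γ rfl (by ring)]
      _ = (γ : A) * w τ γ m (-((i : ℤ) + 1)) +
          ((Q : A) - 1) * ((∑ j ∈ Finset.range i,
            w τ γ (m - ((j : ℤ) + 1 + 1)) (-((i : ℤ) - ((j : ℤ) + 1)))) +
            w τ γ (m - 1) (-(i : ℤ))) +
          (1 - (Q : A)) * ((∑ j ∈ Finset.range i,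
            w τ γ (-((i : ℤ) - (j : ℤ))) (m - ((j : ℤ) + 1))) +
            (γ : A) * P τ (m - 1 - (i : ℤ))) := by
          rw [mul_add ((Q : A) - 1), mul_add (1 - (Q : A))]
          abel

end KeyL


private lemma coreRaw (τ γ Q : Aˣ)
    (hQ : ∀ a : A, (Q : A) * a = a * (Q : A))
    (hbr : (τ : A) * γ * τ * γ = (γ : A) * τ * γ * τ)
    (hq : (γ : A) * γ = ((Q : A) - 1) * γ + (Q : A)) (m : ℤ) (i : ℕ) :
    (((τ ^ (i : ℤ) : Aˣ) : A) * ((γ : Aˣ) : A) * ((τ ^ m : Aˣ) : A) * ((γ : Aˣ) : A) =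
      ((γ : Aˣ) : A) * ((τ ^ m : Aˣ) : A) * ((γ : Aˣ) : A) * ((τ ^ (i : ℤ) : Aˣ) : A) +
        (((Q : Aˣ) : A) - 1) * ∑ j ∈ Finset.range i,
          ((τ ^ ((j : ℤ) + 1) : Aˣ) : A) * ((γ : Aˣ) : A) *
            ((τ ^ (m + (i : ℤ) - ((j : ℤ) + 1)) : Aˣ) : A) +
        (1 - ((Q : Aˣ) : A)) * ∑ j ∈ Finset.range i,
          ((τ ^ (m + (j : ℤ)) : Aˣ) : A) * ((γ : Aˣ) : A) *
            ((τ ^ ((i : ℤ) - (j : ℤ)) : Aˣ) : A)) ∧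
    (((τ ^ (-(i : ℤ)) : Aˣ) : A) * ((γ : Aˣ) : A) * ((τ ^ m : Aˣ) : A) * ((γ : Aˣ) : A) =
      ((γ : Aˣ) : A) * ((τ ^ m : Aˣ) : A) * ((γ : Aˣ) : A) * ((τ ^ (-(i : ℤ)) : Aˣ) : A) +
        (((Q : Aˣ) : A) - 1) * ∑ j ∈ Finset.range i,
          ((τ ^ (m - ((j : ℤ) + 1)) : Aˣ) : A) * ((γ : Aˣ) : A) *
            ((τ ^ (-((i : ℤ) - ((j : ℤ) + 1))) : Aˣ) : A) +
        (1 - ((Q : Aˣ) : A)) * ∑ j ∈ Finset.range i,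
          ((τ ^ (-((i : ℤ) - ((j : ℤ) + 1))) : Aˣ) : A) * ((γ : Aˣ) : A) *
            ((τ ^ (m - ((j : ℤ) + 1)) : Aˣ) : A)) := by
  constructor
  · simpa only [w, P, mul_assoc] using core1 τ γ Q hQ hbr hq m i
  · simpa only [w, P, mul_assoc] using core2 τ γ Q hQ hbr hq m i

end Statement12Aux

/-- Fundamental Lemma, Lemma 5.  In `H_n(q,∞)` (and likewise in
`H_n(q,d)`), for `i, k ∈ ℕ` and `ε ∈ {+1, -1}`:
(i) `t^{εi} g_1^ε t^{εk} g_1^ε = g_1^ε t^{εk} g_1^ε t^{εi}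
      + (q^ε-1) ∑_{j=1}^{i} t^{εj} g_1^ε t^{ε(k+i-j)}
      + (1-q^ε) ∑_{j=0}^{i-1} t^{ε(k+j)} g_1^ε t^{ε(i-j)}`;
(ii) `t^{-εi} g_1^ε t^{εk} g_1^ε = g_1^ε t^{εk} g_1^ε t^{-εi}
      + (q^ε-1) ∑_{j=1}^{i} t^{ε(k-j)} g_1^ε t^{-ε(i-j)}
      + (1-q^ε) ∑_{j=1}^{i} t^{-ε(i-j)} g_1^ε t^{ε(k-j)}`. -/
theorem statement_12 {A : Type*} [Ring A] (q t : Aˣ) (g : ℕ → Aˣ) (n : ℕ) (hn : 2 ≤ n)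
    (hrel : HeckeRels q t g (n - 1)) (e : ℤ) (he : e = 1 ∨ e = -1) (i k : ℕ) :
    (((t ^ (e * (i : ℤ)) : Aˣ) : A) * ((g 1 ^ e : Aˣ) : A) *
          ((t ^ (e * (k : ℤ)) : Aˣ) : A) * ((g 1 ^ e : Aˣ) : A) =
      ((g 1 ^ e : Aˣ) : A) * ((t ^ (e * (k : ℤ)) : Aˣ) : A) * ((g 1 ^ e : Aˣ) : A) *
          ((t ^ (e * (i : ℤ)) : Aˣ) : A) +
        (((q ^ e : Aˣ) : A) - 1) *
          ∑ j ∈ Finset.range i,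
            ((t ^ (e * ((j : ℤ) + 1)) : Aˣ) : A) * ((g 1 ^ e : Aˣ) : A) *
              ((t ^ (e * ((k : ℤ) + (i : ℤ) - ((j : ℤ) + 1))) : Aˣ) : A) +
        (1 - ((q ^ e : Aˣ) : A)) *
          ∑ j ∈ Finset.range i,
            ((t ^ (e * ((k : ℤ) + (j : ℤ))) : Aˣ) : A) * ((g 1 ^ e : Aˣ) : A) *
              ((t ^ (e * ((i : ℤ) - (j : ℤ))) : Aˣ) : A)) ∧
    (((t ^ (-(e * (i : ℤ))) : Aˣ) : A) * ((g 1 ^ e : Aˣ) : A) *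
          ((t ^ (e * (k : ℤ)) : Aˣ) : A) * ((g 1 ^ e : Aˣ) : A) =
      ((g 1 ^ e : Aˣ) : A) * ((t ^ (e * (k : ℤ)) : Aˣ) : A) * ((g 1 ^ e : Aˣ) : A) *
          ((t ^ (-(e * (i : ℤ))) : Aˣ) : A) +
        (((q ^ e : Aˣ) : A) - 1) *
          ∑ j ∈ Finset.range i,
            ((t ^ (e * ((k : ℤ) - ((j : ℤ) + 1))) : Aˣ) : A) * ((g 1 ^ e : Aˣ) : A) *
              ((t ^ (-(e * ((i : ℤ) - ((j : ℤ) + 1)))) : Aˣ) : A) +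
        (1 - ((q ^ e : Aˣ) : A)) *
          ∑ j ∈ Finset.range i,
            ((t ^ (-(e * ((i : ℤ) - ((j : ℤ) + 1)))) : Aˣ) : A) * ((g 1 ^ e : Aˣ) : A) *
              ((t ^ (e * ((k : ℤ) - ((j : ℤ) + 1))) : Aˣ) : A)) := by
  have hb := hrel.2.2.2.1 (show 1 ≤ n - 1 by omega)
  have hg := hrel.2.2.2.2.2 1 le_rfl (show 1 ≤ n - 1 by omega)
  have hc := hrel.1
  rw [pow_two] at hg
  rcases he with rfl | rfl
  · have hQ1 : ∀ a : A, ((q ^ (1 : ℤ) : Aˣ) : A) * a = a * ((q ^ (1 : ℤ) : Aˣ) : A) := by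
      simpa using hc
    have hbr1 : ((t ^ (1 : ℤ) : Aˣ) : A) * ((g 1 ^ (1 : ℤ) : Aˣ) : A) * ((t ^ (1 : ℤ) : Aˣ) : A) *
        ((g 1 ^ (1 : ℤ) : Aˣ) : A) = ((g 1 ^ (1 : ℤ) : Aˣ) : A) * ((t ^ (1 : ℤ) : Aˣ) : A) *
        ((g 1 ^ (1 : ℤ) : Aˣ) : A) * ((t ^ (1 : ℤ) : Aˣ) : A) := by
      simpa using hb
    have hq1 : ((g 1 ^ (1 : ℤ) : Aˣ) : A) * ((g 1 ^ (1 : ℤ) : Aˣ) : A) =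
        (((q ^ (1 : ℤ) : Aˣ) : A) - 1) * ((g 1 ^ (1 : ℤ) : Aˣ) : A) + ((q ^ (1 : ℤ) : Aˣ) : A) := by
      simpa using hg
    have h := coreRaw (t ^ (1 : ℤ)) (g 1 ^ (1 : ℤ)) (q ^ (1 : ℤ)) hQ1 hbr1 hq1 (k : ℤ) i
    simpa only [← mul_neg, zpow_mul] using h
  · -- inverse case
    have hcinv : ∀ a : A, ((q⁻¹ : Aˣ) : A) * a = a * ((q⁻¹ : Aˣ) : A) := by
      intro a
      have h1 := hc (((q⁻¹ : Aˣ) : A) * a * ((q⁻¹ : Aˣ) : A))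
      have l : (q : A) * (((q⁻¹ : Aˣ) : A) * a * ((q⁻¹ : Aˣ) : A)) = a * ((q⁻¹ : Aˣ) : A) := by
        rw [← mul_assoc, ← mul_assoc, Units.mul_inv, one_mul]
      have r : (((q⁻¹ : Aˣ) : A) * a * ((q⁻¹ : Aˣ) : A)) * (q : A) = ((q⁻¹ : Aˣ) : A) * a := by
        rw [mul_assoc, Units.inv_mul, mul_one]
      rw [l, r] at h1
      exact h1.symm
    have ubr : t * g 1 * t * g 1 = g 1 * t * g 1 * t :=
      Units.ext (by simp only [Units.val_mul]; exact hb)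
    have ubrinv : t⁻¹ * (g 1)⁻¹ * t⁻¹ * (g 1)⁻¹ = (g 1)⁻¹ * t⁻¹ * (g 1)⁻¹ * t⁻¹ := by
      have h2 := congrArg (fun u : Aˣ => u⁻¹) ubr
      simp only [mul_inv_rev] at h2
      simpa [mul_assoc] using h2.symm
    have hbrinv : ((t⁻¹ : Aˣ) : A) * (((g 1)⁻¹ : Aˣ) : A) * ((t⁻¹ : Aˣ) : A) *
        (((g 1)⁻¹ : Aˣ) : A) = (((g 1)⁻¹ : Aˣ) : A) * ((t⁻¹ : Aˣ) : A) *
        (((g 1)⁻¹ : Aˣ) : A) * ((t⁻¹ : Aˣ) : A) := by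
      have h3 := congrArg Units.val ubrinv
      simpa only [Units.val_mul] using h3
    have h2 : ((g 1 : Aˣ) : A) = ((q : A) - 1) + (q : A) * (((g 1)⁻¹ : Aˣ) : A) := by
      have h3 := congrArg (fun x : A => x * (((g 1)⁻¹ : Aˣ) : A)) hg
      rw [mul_assoc, Units.mul_inv, mul_one, add_mul, mul_assoc, Units.mul_inv, mul_one] at h3
      exact h3
    have h4 : (((g 1)⁻¹ : Aˣ) : A) = ((q⁻¹ : Aˣ) : A) * ((g 1 : Aˣ) : A) - 1 + ((q⁻¹ : Aˣ) : A) := by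
      have h5 := congrArg (fun x : A => ((q⁻¹ : Aˣ) : A) * x) h2
      rw [mul_add, mul_sub, Units.inv_mul, mul_one, ← mul_assoc, Units.inv_mul, one_mul] at h5
      rw [h5]
      abel
    have hqinv : (((g 1)⁻¹ : Aˣ) : A) * (((g 1)⁻¹ : Aˣ) : A) =
        (((q⁻¹ : Aˣ) : A) - 1) * (((g 1)⁻¹ : Aˣ) : A) + ((q⁻¹ : Aˣ) : A) := by
      nth_rewrite 1 [h4]
      rw [add_mul, sub_mul, one_mul, mul_assoc, Units.mul_inv, mul_one, sub_mul, one_mul]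
      abel
    have hQ1 : ∀ a : A, ((q ^ (-1 : ℤ) : Aˣ) : A) * a = a * ((q ^ (-1 : ℤ) : Aˣ) : A) := by
      simpa only [zpow_neg_one] using hcinv
    have hbr1 : ((t ^ (-1 : ℤ) : Aˣ) : A) * ((g 1 ^ (-1 : ℤ) : Aˣ) : A) *
        ((t ^ (-1 : ℤ) : Aˣ) : A) * ((g 1 ^ (-1 : ℤ) : Aˣ) : A) =
        ((g 1 ^ (-1 : ℤ) : Aˣ) : A) * ((t ^ (-1 : ℤ) : Aˣ) : A) *
        ((g 1 ^ (-1 : ℤ) : Aˣ) : A) * ((t ^ (-1 : ℤ) : Aˣ) : A) := by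
      simpa only [zpow_neg_one] using hbrinv
    have hq1 : ((g 1 ^ (-1 : ℤ) : Aˣ) : A) * ((g 1 ^ (-1 : ℤ) : Aˣ) : A) =
        (((q ^ (-1 : ℤ) : Aˣ) : A) - 1) * ((g 1 ^ (-1 : ℤ) : Aˣ) : A) +
        ((q ^ (-1 : ℤ) : Aˣ) : A) := by
      simpa only [zpow_neg_one] using hqinv
    have h := coreRaw (t ^ (-1 : ℤ)) (g 1 ^ (-1 : ℤ)) (q ^ (-1 : ℤ)) hQ1 hbr1 hq1 (k : ℤ) i
    simpa only [← mul_neg, zpow_mul] using h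


end KnotTypeB
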